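/- Let x0 ∈ [−√3/4, 0) and let h(x) = ((x − x0)^2 + (4/9) g(x)^4)^{1/2} with g(x) = (9x(2x0 − x)/4)^{1/3}, for x ∈ [2x0, 0]. Then h is a convex function on [2x0, 0] and satisfies 0 < ((3/2) x0^4)^{1/3} = h(x0) ≤ h(x) ≤ h(2x0) = h(0) = |x0| for every x ∈ [2x0, 0]. -/

import Mathlib

open Set

/-- auxiliary: sixth powers determine nonneg reals -/
lemma aux_pow6_inj {a b : ℝ} (ha : 0 ≤ a) (hb : 0 ≤ b) (h : a ^ 6 = b ^ 6) : a = b := by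
  rcases lt_trichotomy a b with h' | h' | h'
  · exact absurd h (ne_of_lt (pow_lt_pow_left₀ h' ha (by norm_num)))
  · exact h'
  · exact absurd h (ne_of_gt (pow_lt_pow_left₀ h' hb (by norm_num)))

lemma aux_rpow_third_pow4 {u : ℝ} (hu : 0 ≤ u) :
    (u ^ ((1 : ℝ) / 3)) ^ (4 : ℕ) = u ^ ((4 : ℝ) / 3) := by
  rw [← Real.rpow_natCast (u ^ ((1 : ℝ) / 3)) 4, ← Real.rpow_mul hu]
  norm_num

lemma aux_rpow_third_pow3 {u : ℝ} (hu : 0 ≤ u) :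
    (u ^ ((1 : ℝ) / 3)) ^ (3 : ℕ) = u := by
  rw [← Real.rpow_natCast (u ^ ((1 : ℝ) / 3)) 3, ← Real.rpow_mul hu]
  norm_num

lemma aux_convexOn_congr {s : Set ℝ} {f g : ℝ → ℝ} (hf : ConvexOn ℝ s f)
    (heq : ∀ x ∈ s, f x = g x) : ConvexOn ℝ s g := by
  refine ⟨hf.1, fun x hx y hy a b ha hb hab => ?_⟩
  rw [← heq _ hx, ← heq _ hy, ← heq _ (hf.1 hx hy ha hb hab)]
  exact hf.2 hx hy ha hb hab

noncomputable def auxPhi (x0 x : ℝ) : ℝ :=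
  (x - x0) ^ 2 + 4 / 9 * (9 * x * (2 * x0 - x) / 4) ^ ((4 : ℝ) / 3)

noncomputable def auxPhi' (x0 x : ℝ) : ℝ :=
  2 * (x - x0) + 8 / 3 * (x0 - x) * (9 * x * (2 * x0 - x) / 4) ^ ((1 : ℝ) / 3)

noncomputable def auxPhi'' (x0 x : ℝ) : ℝ :=
  2 - 8 / 3 * (9 * x * (2 * x0 - x) / 4) ^ ((1 : ℝ) / 3)
    + 4 * (x0 - x) ^ 2 / ((9 * x * (2 * x0 - x) / 4) ^ ((1 : ℝ) / 3)) ^ 2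

lemma aux_hasDerivAt_q (x0 x : ℝ) :
    HasDerivAt (fun x => 9 * x * (2 * x0 - x) / 4) (9 * (2 * x0 - 2 * x) / 4) x := by
  have h1 : HasDerivAt (fun x : ℝ => 9 * x) 9 x := by
    simpa using (hasDerivAt_id x).const_mul (9 : ℝ)
  have h2 : HasDerivAt (fun x : ℝ => 2 * x0 - x) (-1) x := by
    simpa using (hasDerivAt_id x).const_sub (2 * x0)
  have := (h1.mul h2).div_const 4
  refine this.congr_deriv ?_
  ring

lemma aux_hasDerivAt_Phi (x0 x : ℝ) : HasDerivAt (auxPhi x0) (auxPhi' x0 x) x := by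
  have hq := aux_hasDerivAt_q x0 x
  have hr := hq.rpow_const (p := (4 : ℝ) / 3) (Or.inr (by norm_num))
  have hsq : HasDerivAt (fun x => (x - x0) ^ 2) (2 * (x - x0)) x := by
    exact (((hasDerivAt_id x).sub_const x0).pow 2).congr_deriv (by simp)
  have := hsq.add (hr.const_mul (4 / 9 : ℝ))
  refine this.congr_deriv ?_
  unfold auxPhi'
  rw [show (4 : ℝ) / 3 - 1 = 1 / 3 by norm_num]
  ring

lemma aux_hasDerivAt_Phi' (x0 x : ℝ) (hq0 : 0 < 9 * x * (2 * x0 - x) / 4) :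
    HasDerivAt (auxPhi' x0) (auxPhi'' x0 x) x := by
  unfold auxPhi' auxPhi''
  have hq := aux_hasDerivAt_q x0 x
  have hw := hq.rpow_const (p := (1 : ℝ) / 3) (Or.inl hq0.ne')
  have hA : HasDerivAt (fun x : ℝ => 2 * (x - x0)) 2 x := by
    simpa using ((hasDerivAt_id x).sub_const x0).const_mul (2 : ℝ)
  have hB : HasDerivAt (fun x : ℝ => x0 - x) (-1) x := by
    simpa using (hasDerivAt_id x).const_sub x0
  have hC : HasDerivAt (fun x : ℝ => 8 / 3 * (x0 - x)) (8 / 3 * -1) x := hB.const_mul (8 / 3)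
  have hprod := hC.mul hw
  have := hA.add hprod
  refine this.congr_deriv ?_
  have h2 : ((9 * x * (2 * x0 - x) / 4 : ℝ) ^ ((1 : ℝ) / 3)) ^ (2 : ℕ)
      = (9 * x * (2 * x0 - x) / 4 : ℝ) ^ ((2 : ℝ) / 3) := by
    rw [← Real.rpow_natCast ((9 * x * (2 * x0 - x) / 4 : ℝ) ^ ((1 : ℝ) / 3)) 2,
      ← Real.rpow_mul hq0.le]
    norm_num
  have e1 : (9 * x * (2 * x0 - x) / 4 : ℝ) ^ ((1 : ℝ) / 3 - 1)
      = 1 / ((9 * x * (2 * x0 - x) / 4) ^ ((1 : ℝ) / 3)) ^ (2 : ℕ) := by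
    rw [h2, show (1 : ℝ) / 3 - 1 = -(2 / 3) by norm_num, Real.rpow_neg hq0.le, one_div]
  rw [e1]
  have hW : ((9 * x * (2 * x0 - x) / 4 : ℝ) ^ ((1 : ℝ) / 3)) ≠ 0 :=
    (Real.rpow_pos_of_pos hq0 _).ne'
  field_simp
  ring

lemma aux_rpow_third_pow6 {u : ℝ} (hu : 0 ≤ u) :
    (u ^ ((1 : ℝ) / 3)) ^ (6 : ℕ) = u ^ 2 := by
  rw [show (6 : ℕ) = 3 * 2 from rfl, pow_mul, aux_rpow_third_pow3 hu]

noncomputable def auxF1 (x0 x : ℝ) : ℝ := auxPhi' x0 x / (2 * Real.sqrt (auxPhi x0 x))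

noncomputable def auxF2 (x0 x : ℝ) : ℝ :=
  (auxPhi'' x0 x * (2 * Real.sqrt (auxPhi x0 x)) - auxPhi' x0 x * (2 * auxF1 x0 x)) /
    (2 * Real.sqrt (auxPhi x0 x)) ^ 2

lemma aux_q_pos {x0 x : ℝ} (h1 : 2 * x0 < x) (h2 : x < 0) :
    0 < 9 * x * (2 * x0 - x) / 4 := by nlinarith

lemma aux_q_nonneg {x0 x : ℝ} (h1 : 2 * x0 ≤ x) (h2 : x ≤ 0) :
    0 ≤ 9 * x * (2 * x0 - x) / 4 := by nlinarith

lemma aux_Phi_pos {x0 x : ℝ} (h1 : 2 * x0 < x) (h2 : x < 0) : 0 < auxPhi x0 x := by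
  have hq := aux_q_pos h1 h2
  have h3 : 0 < (9 * x * (2 * x0 - x) / 4) ^ ((4 : ℝ) / 3) := Real.rpow_pos_of_pos hq _
  unfold auxPhi
  nlinarith [sq_nonneg (x - x0)]

lemma aux_hasDerivAt_sqrtPhi {x0 x : ℝ} (h1 : 2 * x0 < x) (h2 : x < 0) :
    HasDerivAt (fun y => Real.sqrt (auxPhi x0 y)) (auxF1 x0 x) x :=
  (aux_hasDerivAt_Phi x0 x).sqrt (aux_Phi_pos h1 h2).ne'

lemma aux_hasDerivAt_F1 {x0 x : ℝ} (h1 : 2 * x0 < x) (h2 : x < 0) :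
    HasDerivAt (auxF1 x0) (auxF2 x0 x) x := by
  have hPhipos := aux_Phi_pos h1 h2
  have hSpos : 0 < Real.sqrt (auxPhi x0 x) := Real.sqrt_pos.mpr hPhipos
  have hu := aux_hasDerivAt_Phi' x0 x (aux_q_pos h1 h2)
  have hv := (aux_hasDerivAt_sqrtPhi h1 h2).const_mul (2 : ℝ)
  have hne : (2 : ℝ) * Real.sqrt (auxPhi x0 x) ≠ 0 := by positivity
  exact hu.div hv hne

lemma aux_w_le_three_quarters {x0 x : ℝ} (hx0sq : x0 ^ 2 ≤ 3 / 16)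
    (hq : 0 ≤ 9 * x * (2 * x0 - x) / 4) :
    (9 * x * (2 * x0 - x) / 4) ^ ((1 : ℝ) / 3) ≤ 3 / 4 := by
  set w := (9 * x * (2 * x0 - x) / 4 : ℝ) ^ ((1 : ℝ) / 3) with hwdef
  have hw0 : 0 ≤ w := Real.rpow_nonneg hq _
  have hw3 : w ^ 3 = 9 * x * (2 * x0 - x) / 4 := aux_rpow_third_pow3 hq
  have hb : w ^ 3 ≤ 27 / 64 := by rw [hw3]; nlinarith [sq_nonneg (x - x0)]
  nlinarith [sq_nonneg (w - 3 / 4), sq_nonneg (w + 3 / 4), hw0, hb]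

lemma aux_F2_nonneg {x0 x : ℝ} (hx0sq : x0 ^ 2 ≤ 3 / 16) (h1 : 2 * x0 < x) (h2 : x < 0) :
    0 ≤ auxF2 x0 x := by
  have hq0 := aux_q_pos h1 h2
  have hPhipos := aux_Phi_pos h1 h2
  have hSpos : 0 < Real.sqrt (auxPhi x0 x) := Real.sqrt_pos.mpr hPhipos
  have hS2 : Real.sqrt (auxPhi x0 x) ^ 2 = auxPhi x0 x := Real.sq_sqrt hPhipos.le
  have hwpos : 0 < (9 * x * (2 * x0 - x) / 4 : ℝ) ^ ((1 : ℝ) / 3) :=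
    Real.rpow_pos_of_pos hq0 _
  have hw3 := aux_rpow_third_pow3 hq0.le (u := 9 * x * (2 * x0 - x) / 4)
  have hw4 := aux_rpow_third_pow4 hq0.le (u := 9 * x * (2 * x0 - x) / 4)
  have hwle := aux_w_le_three_quarters hx0sq hq0.le
  set w := (9 * x * (2 * x0 - x) / 4 : ℝ) ^ ((1 : ℝ) / 3) with hwdef
  have hA : 0 ≤ 1 - 4 / 3 * w := by linarith
  have hkey : 0 ≤ 2 * auxPhi x0 x * auxPhi'' x0 x - auxPhi' x0 x ^ 2 := by
    unfold auxPhi auxPhi' auxPhi''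
    rw [← hwdef, ← hw4]
    have hexp : 2 * ((x - x0) ^ 2 + 4 / 9 * w ^ 4) *
          (2 - 8 / 3 * w + 4 * (x0 - x) ^ 2 / w ^ 2) -
          (2 * (x - x0) + 8 / 3 * (x0 - x) * w) ^ 2
        = (2 * ((x - x0) ^ 2 + 4 / 9 * w ^ 4) *
            (2 * w ^ 2 - 8 / 3 * w ^ 3 + 4 * (x0 - x) ^ 2) -
            w ^ 2 * (2 * (x - x0) + 8 / 3 * (x0 - x) * w) ^ 2) / w ^ 2 := by
      field_simp
    rw [hexp]
    apply div_nonneg _ (sq_nonneg w)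
    have ht1 : 0 ≤ (1 - 4 / 3 * w) * (w * ((x - x0) ^ 2 * w ^ 2)) :=
      mul_nonneg hA (by positivity)
    have ht3 : 0 ≤ (1 - 4 / 3 * w) * w ^ 6 := mul_nonneg hA (by positivity)
    nlinarith [ht1, ht3, sq_nonneg ((x - x0) ^ 2), sq_nonneg ((x - x0) * w ^ 2)]
  have hrw : auxF2 x0 x
      = (2 * auxPhi x0 x * auxPhi'' x0 x - auxPhi' x0 x ^ 2) / Real.sqrt (auxPhi x0 x) /
        (2 * Real.sqrt (auxPhi x0 x)) ^ 2 := by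
    unfold auxF2 auxF1
    set S := Real.sqrt (auxPhi x0 x) with hS
    rw [← hS2]
    field_simp
  rw [hrw]
  exact div_nonneg (div_nonneg hkey hSpos.le) (by positivity)

lemma aux_sqrtPhi_convex (x0 : ℝ) (hx0 : x0 < 0) (hx0sq : x0 ^ 2 ≤ 3 / 16) :
    ConvexOn ℝ (Icc (2 * x0) 0) (fun x => Real.sqrt (auxPhi x0 x)) := by
  have hint : interior (Icc (2 * x0 : ℝ) 0) = Ioo (2 * x0) 0 := interior_Icc
  apply convexOn_of_hasDerivWithinAt2_nonneg (f' := auxF1 x0) (f'' := auxF2 x0)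
    (convex_Icc _ _)
  · have hcont : Continuous (fun x => auxPhi x0 x) := by
      unfold auxPhi
      apply Continuous.add
      · fun_prop
      · apply Continuous.mul continuous_const
        apply Continuous.rpow_const
        · fun_prop
        · intro x; right; norm_num
    exact (Real.continuous_sqrt.comp hcont).continuousOn
  · intro x hx
    rw [hint] at hx
    exact (aux_hasDerivAt_sqrtPhi hx.1 hx.2).hasDerivWithinAt
  · intro x hx
    rw [hint] at hx
    exact (aux_hasDerivAt_F1 hx.1 hx.2).hasDerivWithinAt
  · intro x hx
    rw [hint] at hx
    exact aux_F2_nonneg hx0sq hx.1 hx.2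

lemma aux_Phi_le {x0 x : ℝ} (hx0sq : x0 ^ 2 ≤ 3 / 16) (h1 : 2 * x0 ≤ x) (h2 : x ≤ 0) :
    auxPhi x0 x ≤ x0 ^ 2 := by
  have hq := aux_q_nonneg h1 h2
  have hw0 : 0 ≤ (9 * x * (2 * x0 - x) / 4 : ℝ) ^ ((1 : ℝ) / 3) := Real.rpow_nonneg hq _
  have hw3 := aux_rpow_third_pow3 hq (u := 9 * x * (2 * x0 - x) / 4)
  have hw4 := aux_rpow_third_pow4 hq (u := 9 * x * (2 * x0 - x) / 4)
  have hwle := aux_w_le_three_quarters hx0sq hq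
  set w := (9 * x * (2 * x0 - x) / 4 : ℝ) ^ ((1 : ℝ) / 3) with hwdef
  unfold auxPhi
  rw [← hw4]
  nlinarith [hw3, mul_nonneg (pow_nonneg hw0 3) (show (0:ℝ) ≤ 3 / 4 - w by linarith)]

lemma aux_Phi_ge {x0 x : ℝ} (hx0 : x0 < 0) (hx0sq : x0 ^ 2 ≤ 3 / 16)
    (h1 : 2 * x0 ≤ x) (h2 : x ≤ 0) :
    auxPhi x0 x0 ≤ auxPhi x0 x := by
  have hq := aux_q_nonneg h1 h2
  have hq0 : (0:ℝ) ≤ 9 * x0 * (2 * x0 - x0) / 4 := by nlinarith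
  have hw0 : 0 ≤ (9 * x * (2 * x0 - x) / 4 : ℝ) ^ ((1 : ℝ) / 3) := Real.rpow_nonneg hq _
  have hw00 : 0 ≤ (9 * x0 * (2 * x0 - x0) / 4 : ℝ) ^ ((1 : ℝ) / 3) := Real.rpow_nonneg hq0 _
  have hw3 := aux_rpow_third_pow3 hq (u := 9 * x * (2 * x0 - x) / 4)
  have hw4 := aux_rpow_third_pow4 hq (u := 9 * x * (2 * x0 - x) / 4)
  have hw03 := aux_rpow_third_pow3 hq0 (u := 9 * x0 * (2 * x0 - x0) / 4)
  have hw04 := aux_rpow_third_pow4 hq0 (u := 9 * x0 * (2 * x0 - x0) / 4)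
  have hwle0 := aux_w_le_three_quarters (x := x0) hx0sq hq0
  set w := (9 * x * (2 * x0 - x) / 4 : ℝ) ^ ((1 : ℝ) / 3) with hwdef
  set w0 := (9 * x0 * (2 * x0 - x0) / 4 : ℝ) ^ ((1 : ℝ) / 3) with hw0def
  have hqle : 9 * x * (2 * x0 - x) / 4 ≤ 9 * x0 * (2 * x0 - x0) / 4 := by
    nlinarith [sq_nonneg (x - x0)]
  have hle : w ≤ w0 := by
    rw [hwdef, hw0def]; exact Real.rpow_le_rpow hq hqle (by norm_num)
  have hwle : w ≤ 3 / 4 := le_trans hle hwle0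
  have hB : 0 ≤ (1 - w0) * (w ^ 2 + w * w0 + w0 ^ 2) - w ^ 3 := by
    nlinarith [mul_nonneg (show (0:ℝ) ≤ 3 / 4 - w0 by linarith)
        (show (0:ℝ) ≤ w ^ 2 + w * w0 + w0 ^ 2 by positivity),
      mul_nonneg (sq_nonneg w) (show (0:ℝ) ≤ 3 / 4 - w by linarith),
      mul_nonneg hw0 (sub_nonneg.mpr hle),
      mul_nonneg (add_nonneg hw0 hw00) (sub_nonneg.mpr hle)]
  have hE : 0 ≤ (w0 - w) * ((1 - w0) * (w ^ 2 + w * w0 + w0 ^ 2) - w ^ 3) :=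
    mul_nonneg (sub_nonneg.mpr hle) hB
  unfold auxPhi
  rw [← hw4, ← hw04]
  nlinarith [hE, hw3, hw03]

/-- Lemma 4.5 i: for `x0 ∈ [-√3/4, 0)` the function
`h(x) = ((x-x0)^2 + (4/9) g(x)^4)^(1/2)` is convex on `[2x0, 0]` and
`0 < ((3/2)x0^4)^(1/3) = h(x0) ≤ h(x) ≤ h(2x0) = h(0) = |x0|`. -/
theorem h_convex_and_bounds_small_x0
    (x0 : ℝ) (hx0l : -Real.sqrt 3 / 4 ≤ x0) (hx0 : x0 < 0)
    (g h : ℝ → ℝ)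
    (hg : ∀ x : ℝ, g x = (9 * x * (2 * x0 - x) / 4) ^ ((1 : ℝ) / 3))
    (hh : ∀ x : ℝ, h x = ((x - x0) ^ 2 + (4 / 9) * (g x) ^ 4) ^ ((1 : ℝ) / 2)) :
    ConvexOn ℝ (Icc (2 * x0) 0) h ∧
    0 < ((3 / 2) * x0 ^ 4) ^ ((1 : ℝ) / 3) ∧
    h x0 = ((3 / 2) * x0 ^ 4) ^ ((1 : ℝ) / 3) ∧
    h (2 * x0) = |x0| ∧ h 0 = |x0| ∧
    ∀ x ∈ Icc (2 * x0) 0, h x0 ≤ h x ∧ h x ≤ |x0| := by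
  have hsq3 : Real.sqrt 3 ^ 2 = 3 := Real.sq_sqrt (by norm_num)
  have hx0sq : x0 ^ 2 ≤ 3 / 16 := by nlinarith [Real.sqrt_nonneg 3]
  -- h agrees with √(auxPhi) on the interval
  have hEq : ∀ x ∈ Icc (2 * x0) 0, h x = Real.sqrt (auxPhi x0 x) := by
    intro x hx
    obtain ⟨h1, h2⟩ := hx
    have hq : 0 ≤ 9 * x * (2 * x0 - x) / 4 := aux_q_nonneg h1 h2
    rw [hh x, hg x, Real.sqrt_eq_rpow]
    congr 1
    unfold auxPhi
    rw [aux_rpow_third_pow4 hq]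
  have hx0mem : x0 ∈ Icc (2 * x0) 0 := ⟨by linarith, hx0.le⟩
  have h2x0mem : (2 * x0) ∈ Icc (2 * x0) 0 := ⟨le_refl _, by linarith⟩
  have h0mem : (0 : ℝ) ∈ Icc (2 * x0) 0 := ⟨by linarith, le_refl _⟩
  have hx04pos : (0 : ℝ) < 3 / 2 * x0 ^ 4 := by
    have hx2 : 0 < x0 ^ 2 := by nlinarith [mul_pos_of_neg_of_neg hx0 hx0]
    nlinarith [pow_pos hx2 2]
  have hRpos : 0 < ((3 / 2) * x0 ^ 4) ^ ((1 : ℝ) / 3) := Real.rpow_pos_of_pos hx04pos _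
  -- value at x0
  have hPhix0pos : 0 < auxPhi x0 x0 := aux_Phi_pos (by linarith) hx0
  have hq0' : (0 : ℝ) ≤ 9 * x0 * (2 * x0 - x0) / 4 := by nlinarith
  have hvalx0 : h x0 = ((3 / 2) * x0 ^ 4) ^ ((1 : ℝ) / 3) := by
    apply aux_pow6_inj (by rw [hEq x0 hx0mem]; exact Real.sqrt_nonneg _) hRpos.le
    have hL : h x0 ^ 6 = auxPhi x0 x0 ^ 3 := by
      rw [hEq x0 hx0mem, show (6 : ℕ) = 2 * 3 from rfl, pow_mul, Real.sq_sqrt hPhix0pos.le]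
    have hw4 := aux_rpow_third_pow4 hq0' (u := 9 * x0 * (2 * x0 - x0) / 4)
    have hw3 := aux_rpow_third_pow3 hq0' (u := 9 * x0 * (2 * x0 - x0) / 4)
    have hR : (((3 / 2) * x0 ^ 4) ^ ((1 : ℝ) / 3)) ^ 6 = ((3 / 2) * x0 ^ 4) ^ 2 :=
      aux_rpow_third_pow6 hx04pos.le
    rw [hL, hR]
    unfold auxPhi
    rw [← hw4]
    set w := (9 * x0 * (2 * x0 - x0) / 4 : ℝ) ^ ((1 : ℝ) / 3)
    calc ((x0 - x0) ^ 2 + 4 / 9 * w ^ 4) ^ 3 = (4 / 9) ^ 3 * (w ^ 3) ^ 4 := by ring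
      _ = (3 / 2 * x0 ^ 4) ^ 2 := by rw [hw3]; ring
  -- values at endpoints
  have hval0 : h 0 = |x0| := by
    have hPhi0 : auxPhi x0 0 = x0 ^ 2 := by
      unfold auxPhi
      rw [show (9 * 0 * (2 * x0 - 0) / 4 : ℝ) = 0 by ring, Real.zero_rpow (by norm_num)]
      ring
    rw [hEq 0 h0mem, hPhi0, Real.sqrt_sq_eq_abs]
  have hval2x0 : h (2 * x0) = |x0| := by
    have hPhi2 : auxPhi x0 (2 * x0) = x0 ^ 2 := by
      unfold auxPhi
      rw [show (9 * (2 * x0) * (2 * x0 - 2 * x0) / 4 : ℝ) = 0 by ring,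
        Real.zero_rpow (by norm_num)]
      ring
    rw [hEq (2 * x0) h2x0mem, hPhi2, Real.sqrt_sq_eq_abs]
  refine ⟨?_, hRpos, hvalx0, hval2x0, hval0, ?_⟩
  · exact aux_convexOn_congr (aux_sqrtPhi_convex x0 hx0 hx0sq)
      (fun x hx => (hEq x hx).symm)
  · intro x hx
    obtain ⟨h1, h2⟩ := hx
    constructor
    · rw [hEq x0 hx0mem, hEq x ⟨h1, h2⟩]
      exact Real.sqrt_le_sqrt (aux_Phi_ge hx0 hx0sq h1 h2)
    · rw [hEq x ⟨h1, h2⟩, show |x0| = Real.sqrt (x0 ^ 2) from (Real.sqrt_sq_eq_abs x0).symm]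
      exact Real.sqrt_le_sqrt (aux_Phi_le hx0sq h1 h2)
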